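/- Let (Gₙ) be a sequence of closed subspaces of a real Hilbert space H such that liminf Gₙ = H, i.e. every x ∈ H is the norm limit of a sequence xₙ with xₙ ∈ Gₙ. Then limsup Gₙ^⊥ = {0}; in particular, whenever (y_{kₙ}) is a weakly convergent subsequence of a sequence (yₙ) with yₙ ∈ Gₙ^⊥, its weak limit is 0. -/
import Mathlib


open Filter
open scoped InnerProductSpace

/-- `liminf Gₙ`: the set of vectors that are norm limits of sequences `xₙ ∈ Gₙ`. -/
def liminfSet {H : Type*} [NormedAddCommGroup H] [InnerProductSpace ℝ H]
    (G : ℕ → Submodule ℝ H) : Set H :=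
  {x | ∃ xs : ℕ → H, (∀ n, xs n ∈ G n) ∧ Tendsto xs atTop (nhds x)}

/-- Weak convergence of a sequence in an inner product space. -/
def WeakTendsto {H : Type*} [NormedAddCommGroup H] [InnerProductSpace ℝ H]
    (xs : ℕ → H) (x : H) : Prop :=
  ∀ y : H, Tendsto (fun n => ⟪xs n, y⟫_ℝ) atTop (nhds ⟪x, y⟫_ℝ)

/-- The set of weak limits of weakly convergent subsequences `x_{kₙ} ∈ G_{kₙ}`. -/
def weakSubseqLimits {H : Type*} [NormedAddCommGroup H] [InnerProductSpace ℝ H]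
    (G : ℕ → Submodule ℝ H) : Set H :=
  {x | ∃ k : ℕ → ℕ, StrictMono k ∧
    ∃ xs : ℕ → H, (∀ n, xs n ∈ G (k n)) ∧ WeakTendsto xs x}

/-- `limsup Gₙ`: the closed linear span of all weak subsequential limits. -/
noncomputable def limsupSubmodule {H : Type*} [NormedAddCommGroup H]
    [InnerProductSpace ℝ H] (G : ℕ → Submodule ℝ H) : Submodule ℝ H :=
  (Submodule.span ℝ (weakSubseqLimits G)).topologicalClosure


theorem weak_limit_zero {H : Type*} [NormedAddCommGroup H]
    [InnerProductSpace ℝ H] [CompleteSpace H] (G : ℕ → Submodule ℝ H)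
    (hliminf : liminfSet G = Set.univ) :
    ∀ ys : ℕ → H, (∀ n, ys n ∈ (G n)ᗮ) →
        ∀ k : ℕ → ℕ, StrictMono k →
          ∀ l : H, WeakTendsto (fun n => ys (k n)) l → l = 0 := by
  intro ys hys k hk l hl
  -- the sequence of functionals
  set f : ℕ → H →L[ℝ] ℝ := fun n => innerSL ℝ (ys (k n)) with hf
  have hpt : ∀ x : H, ∃ C, ∀ n, ‖f n x‖ ≤ C := by
    intro x
    obtain ⟨C, hC⟩ := ((hl x).norm.bddAbove_range).imp (fun C hC => hC)
    exact ⟨C, fun n => hC ⟨n, rfl⟩⟩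
  obtain ⟨C, hC⟩ := banach_steinhaus hpt
  have hCnorm : ∀ n, ‖ys (k n)‖ ≤ C := by
    intro n
    have := hC n
    rwa [innerSL_apply_norm] at this
  have key : ∀ x : H, ⟪l, x⟫_ℝ = 0 := by
    intro x
    have hx : x ∈ liminfSet G := by rw [hliminf]; trivial
    obtain ⟨xs, hxs, hxt⟩ := hx
    have h0 : Tendsto (fun n => ⟪ys (k n), x⟫_ℝ) atTop (nhds 0) := by
      have hsub : Tendsto (fun n => xs (k n)) atTop (nhds x) :=
        hxt.comp hk.tendsto_atTop
      have hdiff : Tendsto (fun n => ‖x - xs (k n)‖) atTop (nhds 0) := by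
        have h := hsub.const_sub x
        simpa using h.norm
      have hbound : ∀ n, ‖⟪ys (k n), x⟫_ℝ‖ ≤ C * ‖x - xs (k n)‖ := by
        intro n
        have horth : ⟪ys (k n), xs (k n)⟫_ℝ = 0 := by
          have := (hys (k n))
          rw [Submodule.mem_orthogonal] at this
          have h2 := this (xs (k n)) (hxs (k n))
          rwa [real_inner_comm] at h2
        calc ‖⟪ys (k n), x⟫_ℝ‖ = ‖⟪ys (k n), x - xs (k n)⟫_ℝ‖ := by
              rw [inner_sub_right, horth, sub_zero]
          _ ≤ ‖ys (k n)‖ * ‖x - xs (k n)‖ := norm_inner_le_norm _ _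
          _ ≤ C * ‖x - xs (k n)‖ := by
              exact mul_le_mul_of_nonneg_right (hCnorm n) (norm_nonneg _)
      have hCd : Tendsto (fun n => C * ‖x - xs (k n)‖) atTop (nhds 0) := by
        simpa using hdiff.const_mul C
      exact squeeze_zero_norm hbound hCd
    exact tendsto_nhds_unique (hl x) h0
  have := key l
  rwa [real_inner_self_eq_norm_sq, pow_eq_zero_iff (by norm_num), norm_eq_zero] at this

theorem limsup_orthogonal_eq_bot_of_liminf_univ {H : Type*} [NormedAddCommGroup H]
    [InnerProductSpace ℝ H] [CompleteSpace H] (G : ℕ → Submodule ℝ H)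
    (hG : ∀ n, IsClosed ((G n : Set H)))
    (hliminf : liminfSet G = Set.univ) :
    limsupSubmodule (fun n => (G n)ᗮ) = ⊥ ∧
      ∀ ys : ℕ → H, (∀ n, ys n ∈ (G n)ᗮ) →
        ∀ k : ℕ → ℕ, StrictMono k →
          ∀ l : H, WeakTendsto (fun n => ys (k n)) l → l = 0 := by
  have h2 := weak_limit_zero G hliminf
  refine ⟨?_, h2⟩
  have hsub : weakSubseqLimits (fun n => (G n)ᗮ) ⊆ {0} := by
    rintro x ⟨k, hk, xs, hxs, hwt⟩
    -- need xs n = ys (k n) for some ys; construct ys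
    classical
    obtain ⟨kinv, hkinv⟩ : ∃ kinv : ℕ → ℕ, ∀ n, kinv (k n) = n :=
      ⟨fun m => if h : ∃ n, k n = m then h.choose else 0, by
        intro n
        have h : ∃ m, k m = k n := ⟨n, rfl⟩
        simp only [h, dif_pos]
        exact hk.injective h.choose_spec⟩
    set ys : ℕ → H := fun m => if h : ∃ n, k n = m then xs (kinv m) else 0 with hysdef
    have hysmem : ∀ m, ys m ∈ (G m)ᗮ := by
      intro m
      by_cases h : ∃ n, k n = m
      · simp only [hysdef, h, dif_pos]
        obtain ⟨n, hn⟩ := h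
        subst hn
        rw [hkinv]
        exact hxs n
      · simp only [hysdef, h, dif_neg, not_false_iff]
        exact Submodule.zero_mem _
    have heq : (fun n => ys (k n)) = xs := by
      funext n
      have h : ∃ m, k m = k n := ⟨n, rfl⟩
      simp only [hysdef, h, dif_pos, hkinv]
    have := h2 ys hysmem k hk x (by rw [heq]; exact hwt)
    simp [this]
  have hspan : Submodule.span ℝ (weakSubseqLimits (fun n => (G n)ᗮ)) = ⊥ := by
    rw [Submodule.span_eq_bot]
    intro x hx
    exact hsub hx
  unfold limsupSubmodule
  rw [hspan]
  exact IsClosed.submodule_topologicalClosure_eq isClosed_singleton
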